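/- Let F be a free module over S = K[x_1,...,x_n], let M ⊆ F be a submodule generated by g_1,...,g_t, f_1,...,f_s, and let L = Sg_1 + ... + Sg_t. Fix a monomial order on S. Then M = L ⊕ ⊕_{i=1}^s f_i · N_{L_{i−1} : f_i} as K-vector spaces, where L_k = (g_1,...,g_t,f_1,...,f_k) and L_{i−1} : f_i = {p ∈ S : p·f_i ∈ L_{i−1}}. -/

import Mathlib

open MvPolynomial

noncomputable section

variable (K : Type*) [Field K]

/-- The free module `F = S e₁ ⊕ ⋯ ⊕ S eₘ` over `S = K[x₁,…,xₙ]`, realized as `Fin m → S`. -/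
abbrev FreeMod (n m : ℕ) := Fin m → MvPolynomial (Fin n) K

/-- The monomial `x^d · e_j` of the free module. -/
def mval {n m : ℕ} (p : Fin m × (Fin n →₀ ℕ)) : FreeMod K n m :=
  Pi.single p.1 (monomial p.2 (1 : K))

/-- Degree of the monomial `x^d e_j` relative to basis degrees `e`. -/
def mdeg {n m : ℕ} (e : Fin m → ℕ) (p : Fin m × (Fin n →₀ ℕ)) : ℕ :=
  (p.2.sum fun _ k => k) + e p.1

/-- The degree-`z` homogeneous component of the graded free module (as a `K`-subspace). -/
def degComp (n m : ℕ) (e : Fin m → ℕ) (z : ℕ) : Submodule K (FreeMod K n m) :=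
  Submodule.span K { f | ∃ p : Fin m × (Fin n →₀ ℕ), mdeg e p = z ∧ f = mval K p }

/-- The cone `h·K[u]`: the `K`-span of the products of `h` with monomials in the variables `u`. -/
def cone {n m : ℕ} (h : FreeMod K n m) (u : Set (Fin n)) : Submodule K (FreeMod K n m) :=
  Submodule.span K
    { f | ∃ d : Fin n →₀ ℕ, ↑d.support ⊆ u ∧ f = (monomial d (1 : K)) • h }

/-- Data of a cone: a pivot, a set of variables, and the degree of the pivot. -/
abbrev ConeData (K : Type*) [Field K] (n m : ℕ) :=
  (FreeMod K n m) × Finset (Fin n) × ℕ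

/-- `P` is a cone decomposition of the `K`-subspace `T ⊆ F`: pivots are nonzero homogeneous
of the recorded degree, and `T` is the internal direct sum of the cones of `P`. -/
def IsConeDecomp {n m : ℕ} (e : Fin m → ℕ) (P : Finset (ConeData K n m))
    (T : Submodule K (FreeMod K n m)) : Prop :=
  (∀ c ∈ P, c.1 ≠ 0 ∧ c.1 ∈ degComp K n m e c.2.2) ∧
  iSupIndep (fun c : P => cone K c.1.1 ↑c.1.2.1) ∧
  (⨆ c : P, cone K c.1.1 ↑c.1.2.1) = T

/-- `P` is `q`-standard. -/
def IsStandard {n m : ℕ} (q : ℕ) (P : Finset (ConeData K n m)) : Prop :=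
  (∀ c ∈ P, 0 < c.2.1.card → q ≤ c.2.2) ∧
  (∀ c ∈ P, 0 < c.2.1.card → ∀ d, q ≤ d → d ≤ c.2.2 →
    ∃ c' ∈ P, c'.2.2 = d ∧ c.2.1.card ≤ c'.2.1.card)

/-- `P` is `q`-exact: `q`-standard and the positive-dimensional cones have distinct degrees. -/
def IsExact {n m : ℕ} (q : ℕ) (P : Finset (ConeData K n m)) : Prop :=
  IsStandard K q P ∧
  ∀ c ∈ P, ∀ c' ∈ P, 0 < c.2.1.card → 0 < c'.2.1.card → c ≠ c' → c.2.2 ≠ c'.2.2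

/-- The Macaulay constants `b k = max({q} ∪ {1 + deg C : C ∈ P, dim C ≥ k})`. -/
def macaulay {n m : ℕ} (q : ℕ) (P : Finset (ConeData K n m)) (k : ℕ) : ℕ :=
  max q ((P.filter fun c => k ≤ c.2.1.card).sup fun c => c.2.2 + 1)

/-- The Hilbert function of a graded `K`-subspace `T ⊆ F`. -/
def hilb {n m : ℕ} (e : Fin m → ℕ) (T : Submodule K (FreeMod K n m)) (z : ℕ) : ℕ :=
  Module.finrank K ↥(T ⊓ degComp K n m e z)

/-- The set of monomials (with their positions) appearing in `f ∈ F`. -/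
def suppM {n m : ℕ} (f : FreeMod K n m) : Finset (Fin m × (Fin n →₀ ℕ)) :=
  Finset.univ.biUnion fun j => (f j).support.image fun d => (j, d)

/-- `p` is the leading monomial of `f` with respect to the monomial order `mo`. -/
def IsLM {n m : ℕ} (mo : LinearOrder (Fin m × (Fin n →₀ ℕ))) (f : FreeMod K n m)
    (p : Fin m × (Fin n →₀ ℕ)) : Prop :=
  p ∈ suppM K f ∧ ∀ p' ∈ suppM K f, mo.le p' p

/-- The initial module of `M` w.r.t. the monomial order `mo`. -/
def initMod {n m : ℕ} (mo : LinearOrder (Fin m × (Fin n →₀ ℕ)))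
    (M : Submodule (MvPolynomial (Fin n) K) (FreeMod K n m)) :
    Submodule (MvPolynomial (Fin n) K) (FreeMod K n m) :=
  Submodule.span _ { f | ∃ g ∈ M, ∃ p, IsLM K mo g p ∧ f = mval K p }

/-- `G` is a Gröbner basis of `M` w.r.t. `mo`. -/
def IsGB {n m : ℕ} (mo : LinearOrder (Fin m × (Fin n →₀ ℕ)))
    (G : Set (FreeMod K n m))
    (M : Submodule (MvPolynomial (Fin n) K) (FreeMod K n m)) : Prop :=
  G ⊆ M ∧
  Submodule.span (MvPolynomial (Fin n) K)
      { f | ∃ g ∈ G, ∃ p, IsLM K mo g p ∧ f = mval K p } = initMod K mo M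

/-- `mo` is a monomial order: compatible with multiplication and monomials of `S` are ≻ 1. -/
def IsMonomialOrder {n m : ℕ} (mo : LinearOrder (Fin m × (Fin n →₀ ℕ))) : Prop :=
  (∀ a b : Fin m × (Fin n →₀ ℕ), ∀ γ : Fin n →₀ ℕ,
      mo.lt a b → mo.lt (a.1, a.2 + γ) (b.1, b.2 + γ)) ∧
  (∀ (j : Fin m) (α γ : Fin n →₀ ℕ), γ ≠ 0 → mo.lt (j, α) (j, α + γ))

/-- `G` is the reduced Gröbner basis of `M` w.r.t. `mo`. -/
def IsReducedGB {n m : ℕ} (mo : LinearOrder (Fin m × (Fin n →₀ ℕ)))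
    (G : Set (FreeMod K n m))
    (M : Submodule (MvPolynomial (Fin n) K) (FreeMod K n m)) : Prop :=
  IsGB K mo G M ∧ (0 : FreeMod K n m) ∉ G ∧
  (∀ g ∈ G, ∀ p, IsLM K mo g p → (g p.1).coeff p.2 = 1) ∧
  (∀ g ∈ G, ∀ g' ∈ G, g ≠ g' → ∀ q ∈ suppM K g, ∀ p, IsLM K mo g' p →
    ¬ (p.1 = q.1 ∧ p.2 ≤ q.2))

/-- The zeroth Fitting ideal of `F/M`: the ideal of `m × m` minors of a presentation matrix,
equivalently generated by determinants of matrices whose columns lie in `M`. -/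
def fitt0 {n m : ℕ} (M : Submodule (MvPolynomial (Fin n) K) (FreeMod K n m)) :
    Ideal (MvPolynomial (Fin n) K) :=
  Ideal.span { p | ∃ A : Matrix (Fin m) (Fin m) (MvPolynomial (Fin n) K),
    (∀ i, (fun j => A j i) ∈ M) ∧ p = A.det }

end

noncomputable section
variable (K : Type*) [Field K]

/-- A monomial order on `S = K[x₁,…,xₙ]`. -/
def IsMonomialOrderS {n : ℕ} (mo : LinearOrder (Fin n →₀ ℕ)) : Prop :=
  (∀ a b γ : Fin n →₀ ℕ, mo.lt a b → mo.lt (a + γ) (b + γ)) ∧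
  (∀ α γ : Fin n →₀ ℕ, γ ≠ 0 → mo.lt α (α + γ))

/-- The initial ideal of an ideal `I ⊆ S` w.r.t. a monomial order `mo`. -/
def initIdeal {n : ℕ} (mo : LinearOrder (Fin n →₀ ℕ)) (I : Ideal (MvPolynomial (Fin n) K)) :
    Ideal (MvPolynomial (Fin n) K) :=
  Ideal.span { q | ∃ p ∈ I, ∃ δ ∈ p.support, (∀ δ' ∈ p.support, mo.le δ' δ) ∧
      q = monomial δ (1 : K) }

/-- `N_I`: the `K`-span of the monomials of `S` not in the initial ideal of `I`. -/
def normalForms {n : ℕ} (mo : LinearOrder (Fin n →₀ ℕ)) (I : Ideal (MvPolynomial (Fin n) K)) :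
    Submodule K (MvPolynomial (Fin n) K) :=
  Submodule.span K { q | ∃ δ : Fin n →₀ ℕ, q = monomial δ (1 : K) ∧
      monomial δ (1 : K) ∉ initIdeal K mo I }

end


noncomputable section
open MvPolynomial

namespace Stmt16Aux

/-! ### Generic order helpers for an explicit `LinearOrder` term -/

variable {α : Type*}

lemma mo_lt_of_le_ne (mo : LinearOrder α) {a b : α} (h : mo.le a b) (hne : a ≠ b) :
    mo.lt a b :=
  (mo.lt_iff_le_not_ge a b).2 ⟨h, fun h' => hne (mo.le_antisymm a b h h')⟩

lemma mo_lt_of_lt_of_le (mo : LinearOrder α) {a b c : α} (h1 : mo.lt a b) (h2 : mo.le b c) :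
    mo.lt a c :=
  @lt_of_lt_of_le α mo.toPreorder a b c h1 h2

lemma mo_le_of_lt (mo : LinearOrder α) {a b : α} (h : mo.lt a b) : mo.le a b :=
  @le_of_lt α mo.toPreorder a b h

lemma mo_irrefl (mo : LinearOrder α) (a : α) : ¬ mo.lt a a :=
  @lt_irrefl α mo.toPreorder a

/-- every nonempty finset has a `mo`-maximum -/
lemma exists_mo_max (mo : LinearOrder α) {s : Finset α} (hs : s.Nonempty) :
    ∃ a ∈ s, ∀ b ∈ s, mo.le b a := by
  classical
  induction s using Finset.induction_on with
  | empty => exact absurd hs (by simp)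
  | @insert a s ha ih =>
    rcases s.eq_empty_or_nonempty with rfl | hs'
    · exact ⟨a, by simp, by simp [mo.le_refl a]⟩
    · obtain ⟨b, hb, hmax⟩ := ih hs'
      rcases mo.le_total a b with h | h
      · refine ⟨b, Finset.mem_insert_of_mem hb, ?_⟩
        intro x hx
        rcases Finset.mem_insert.1 hx with rfl | hx
        · exact h
        · exact hmax x hx
      · refine ⟨a, Finset.mem_insert_self _ _, ?_⟩
        intro x hx
        rcases Finset.mem_insert.1 hx with rfl | hx
        · exact mo.le_refl x
        · exact mo.le_trans _ _ _ (hmax x hx) h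

variable {K : Type*} [Field K] {n : ℕ}

lemma mo_le_of_le (mo : LinearOrder (Fin n →₀ ℕ)) (hmo : IsMonomialOrderS mo)
    {a b : Fin n →₀ ℕ} (h : a ≤ b) : mo.le a b := by
  rcases eq_or_ne (b - a) 0 with h0 | h0
  · have : a = b := le_antisymm h (tsub_eq_zero_iff_le.1 h0)
    exact this ▸ mo.le_refl a
  · have := hmo.2 a (b - a) h0
    rw [add_tsub_cancel_of_le h] at this
    exact mo_le_of_lt mo this

lemma mo_le_add (mo : LinearOrder (Fin n →₀ ℕ)) (hmo : IsMonomialOrderS mo)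
    {a b : Fin n →₀ ℕ} (h : mo.le a b) (γ : Fin n →₀ ℕ) : mo.le (a + γ) (b + γ) := by
  rcases eq_or_ne a b with rfl | hne
  · exact mo.le_refl _
  · exact mo_le_of_lt mo (hmo.1 a b γ (mo_lt_of_le_ne mo h hne))

lemma mo_wf (mo : LinearOrder (Fin n →₀ ℕ)) (hmo : IsMonomialOrderS mo) :
    WellFounded mo.lt := by
  rw [RelEmbedding.wellFounded_iff_isEmpty]
  constructor
  intro f
  obtain ⟨a, b, hab, hle⟩ :=
    (Set.isPWO_of_wellQuasiOrderedLE (Set.univ : Set (Fin n →₀ ℕ))).exists_lt (f := f) (fun _ => Set.mem_univ _)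
  have h1 : mo.lt (f b) (f a) := f.map_rel_iff.2 hab
  have h2 : mo.le (f a) (f b) := mo_le_of_le mo hmo hle
  exact mo_irrefl mo (f b) (mo_lt_of_lt_of_le mo h1 h2)

/-! ### Support of elements of spans of monomials -/

lemma support_mem_span_monomials {P : (Fin n →₀ ℕ) → Prop} {p : MvPolynomial (Fin n) K}
    (hp : p ∈ Submodule.span K
      {q : MvPolynomial (Fin n) K | ∃ δ, q = monomial δ (1 : K) ∧ P δ}) :
    ∀ δ ∈ p.support, P δ := by
  classical
  induction hp using Submodule.span_induction with
  | mem q hq =>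
    obtain ⟨δ', rfl, hP⟩ := hq
    intro δ hδ
    rw [support_monomial, if_neg one_ne_zero, Finset.mem_singleton] at hδ
    exact hδ ▸ hP
  | zero => simp
  | add x y hx hy ihx ihy =>
    intro δ hδ
    rcases Finset.mem_union.1 (support_add hδ) with h | h
    · exact ihx δ h
    · exact ihy δ h
  | smul a x hx ih =>
    intro δ hδ
    exact ih δ (support_smul hδ)

lemma initIdeal_eq_span_image (mo : LinearOrder (Fin n →₀ ℕ))
    (I : Ideal (MvPolynomial (Fin n) K)) :
    initIdeal K mo I = Ideal.span ((fun d => monomial d (1 : K)) ''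
      {δ | ∃ p ∈ I, δ ∈ p.support ∧ ∀ δ' ∈ p.support, mo.le δ' δ}) := by
  unfold initIdeal
  congr 1
  ext q
  constructor
  · rintro ⟨p, hp, δ, hδ, hmax, rfl⟩
    exact ⟨δ, ⟨p, hp, hδ, hmax⟩, rfl⟩
  · rintro ⟨δ, ⟨p, hp, hδ, hmax⟩, rfl⟩
    exact ⟨p, hp, δ, hδ, hmax, rfl⟩

/-- `I ∩ N_I = 0`. -/
lemma eq_zero_of_mem_inf (mo : LinearOrder (Fin n →₀ ℕ))
    (I : Ideal (MvPolynomial (Fin n) K)) {p : MvPolynomial (Fin n) K}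
    (hpI : p ∈ I) (hpN : p ∈ normalForms K mo I) : p = 0 := by
  by_contra hne
  have hs : p.support.Nonempty :=
    Finset.nonempty_iff_ne_empty.2 fun h => hne (support_eq_empty.1 h)
  obtain ⟨δ, hδ, hmax⟩ := exists_mo_max mo hs
  have hin : monomial δ (1 : K) ∈ initIdeal K mo I :=
    Ideal.subset_span ⟨p, hpI, δ, hδ, hmax, rfl⟩
  have hP : monomial δ (1 : K) ∉ initIdeal K mo I := by
    unfold normalForms at hpN
    exact support_mem_span_monomials
      (P := fun δ => monomial δ (1 : K) ∉ initIdeal K mo I) hpN δ hδ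
  exact hP hin

/-- Macaulay: `S = I + N_I` as `K`-spaces. -/
lemma mem_ideal_sup_normalForms (mo : LinearOrder (Fin n →₀ ℕ))
    (hmo : IsMonomialOrderS mo) (I : Ideal (MvPolynomial (Fin n) K))
    (p : MvPolynomial (Fin n) K) :
    p ∈ (Submodule.restrictScalars K (I : Submodule (MvPolynomial (Fin n) K)
        (MvPolynomial (Fin n) K))) ⊔ normalForms K mo I := by
  classical
  set A := (Submodule.restrictScalars K (I : Submodule (MvPolynomial (Fin n) K)
      (MvPolynomial (Fin n) K))) ⊔ normalForms K mo I with hA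
  have key : ∀ δ : Fin n →₀ ℕ, ∀ p : MvPolynomial (Fin n) K,
      p.support.Nonempty → (∀ δ' ∈ p.support, mo.le δ' δ) → p ∈ A := by
    intro δ
    refine (mo_wf mo hmo).induction
      (C := fun δ => ∀ p : MvPolynomial (Fin n) K,
        p.support.Nonempty → (∀ δ' ∈ p.support, mo.le δ' δ) → p ∈ A) δ ?_
    intro δc IH p hne hbound
    obtain ⟨μ, hμ, hmaxμ⟩ := exists_mo_max mo hne
    have hμδ : mo.le μ δc := hbound μ hμ
    by_cases hin : monomial μ (1 : K) ∈ initIdeal K mo I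
    · -- leading monomial in the initial ideal: reduce by an element of I
      rw [initIdeal_eq_span_image] at hin
      obtain ⟨δ₂, hδ₂, hle⟩ := mem_ideal_span_monomial_image.1 hin μ
        (by rw [mem_support_iff, coeff_monomial, if_pos rfl]; exact one_ne_zero)
      obtain ⟨h, hhI, hδ₂h, hmaxh⟩ := hδ₂
      set γ := μ - δ₂ with hγdef
      have hγ : γ + δ₂ = μ := by
        rw [add_comm]; exact add_tsub_cancel_of_le hle
      have hch : h.coeff δ₂ ≠ 0 := mem_support_iff.1 hδ₂h
      set q : MvPolynomial (Fin n) K :=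
        (p.coeff μ * (h.coeff δ₂)⁻¹) • (monomial γ (1 : K) * h) with hq
      have hqA : q ∈ A := by
        have h1 : monomial γ (1 : K) * h ∈ Submodule.restrictScalars K
            (I : Submodule (MvPolynomial (Fin n) K) (MvPolynomial (Fin n) K)) :=
          I.mul_mem_left _ hhI
        exact Submodule.mem_sup_left (Submodule.smul_mem _ _ h1)
      have hcq : q.coeff μ = p.coeff μ := by
        have hc1 : coeff (γ + δ₂) (monomial γ (1 : K) * h) = h.coeff δ₂ := by
          rw [coeff_monomial_mul, one_mul]
        rw [hq, coeff_smul, ← hγ, hc1, smul_eq_mul, mul_assoc,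
          inv_mul_cancel₀ hch, mul_one]
      have hsupq : ∀ δ'' ∈ q.support, mo.le δ'' μ := by
        intro δ'' hδ''
        rw [hq] at hδ''
        have h1 : δ'' ∈ (monomial γ (1 : K) * h).support := support_smul hδ''
        rw [mem_support_iff, coeff_monomial_mul'] at h1
        by_cases h2 : γ ≤ δ''
        · rw [if_pos h2, one_mul] at h1
          have h4 : mo.le (δ'' - γ) δ₂ := hmaxh _ (mem_support_iff.2 h1)
          have h5 : mo.le ((δ'' - γ) + γ) (δ₂ + γ) := mo_le_add mo hmo h4 γ
          rwa [tsub_add_cancel_of_le h2, add_comm δ₂ γ, hγ] at h5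
        · rw [if_neg h2] at h1
          exact absurd rfl h1
      have hcopq : ∀ δ'' ∈ (p - q).support, mo.le δ'' μ ∧ δ'' ≠ μ := by
        intro δ'' hd
        have hne'' : δ'' ≠ μ := by
          rintro rfl
          rw [mem_support_iff, coeff_sub, hcq, sub_self] at hd
          exact hd rfl
        refine ⟨?_, hne''⟩
        rw [mem_support_iff, coeff_sub] at hd
        rcases ne_or_eq (p.coeff δ'') 0 with h1 | h1
        · exact hmaxμ _ (mem_support_iff.2 h1)
        · have h2 : q.coeff δ'' ≠ 0 := by
            rw [h1, zero_sub, neg_ne_zero] at hd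
            exact hd
          exact hsupq _ (mem_support_iff.2 h2)
      rcases (p - q).support.eq_empty_or_nonempty with hpq | hpq
      · have hpeq : p = q := sub_eq_zero.1 (support_eq_empty.1 hpq)
        rw [hpeq]; exact hqA
      · obtain ⟨μ1, hμ1, hmax1⟩ := exists_mo_max mo hpq
        have hlt : mo.lt μ1 δc := by
          obtain ⟨hle1, hne1⟩ := hcopq μ1 hμ1
          exact mo_lt_of_lt_of_le mo (mo_lt_of_le_ne mo hle1 hne1) hμδ
        have hmem1 : p - q ∈ A := IH μ1 hlt (p - q) hpq hmax1
        have hps : p = (p - q) + q := by ring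
        rw [hps]; exact A.add_mem hmem1 hqA
    · -- leading monomial not in the initial ideal: subtract it
      have hmono : monomial μ (p.coeff μ) ∈ normalForms K mo I := by
        have h1 : monomial μ (1 : K) ∈
            ({q : MvPolynomial (Fin n) K | ∃ δ, q = monomial δ (1 : K) ∧
              monomial δ (1 : K) ∉ initIdeal K mo I}) := ⟨μ, rfl, hin⟩
        have h0 : monomial μ (1 : K) ∈ normalForms K mo I := by
          unfold normalForms; exact Submodule.subset_span h1
        have h2 := Submodule.smul_mem (normalForms K mo I) (p.coeff μ) h0
        rwa [smul_monomial, smul_eq_mul, mul_one] at h2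
      set q : MvPolynomial (Fin n) K := monomial μ (p.coeff μ) with hq
      have hqA : q ∈ A := Submodule.mem_sup_right hmono
      have hcopq : ∀ δ'' ∈ (p - q).support, mo.le δ'' μ ∧ δ'' ≠ μ := by
        intro δ'' hd
        have hne'' : δ'' ≠ μ := by
          rintro rfl
          rw [mem_support_iff, coeff_sub, hq, coeff_monomial, if_pos rfl, sub_self] at hd
          exact hd rfl
        refine ⟨?_, hne''⟩
        rw [mem_support_iff, coeff_sub, hq, coeff_monomial,
          if_neg (fun h => hne'' h.symm), sub_zero] at hd
        exact hmaxμ _ (mem_support_iff.2 hd)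
      rcases (p - q).support.eq_empty_or_nonempty with hpq | hpq
      · have hpeq : p = q := sub_eq_zero.1 (support_eq_empty.1 hpq)
        rw [hpeq]; exact hqA
      · obtain ⟨μ1, hμ1, hmax1⟩ := exists_mo_max mo hpq
        have hlt : mo.lt μ1 δc := by
          obtain ⟨hle1, hne1⟩ := hcopq μ1 hμ1
          exact mo_lt_of_lt_of_le mo (mo_lt_of_le_ne mo hle1 hne1) hμδ
        have hmem1 : p - q ∈ A := IH μ1 hlt (p - q) hpq hmax1
        have hps : p = (p - q) + q := by ring
        rw [hps]; exact A.add_mem hmem1 hqA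
  rcases p.support.eq_empty_or_nonempty with h | h
  · rw [support_eq_empty.1 h]; exact Submodule.zero_mem _
  · obtain ⟨δ, _, hmax⟩ := exists_mo_max mo h
    exact key δ p h hmax

end Stmt16Aux

namespace Stmt16Aux

lemma chain_decomp {R V : Type*} [Ring R] [AddCommGroup V] [Module R V] {s : ℕ}
    (c : Fin (s + 1) → Submodule R V) (A : ℕ → Submodule R V)
    (h0 : c 0 = A 0)
    (hstep : ∀ i : Fin s, A ((i : ℕ) + 1) = A (i : ℕ) ⊔ c i.succ)
    (hdisj : ∀ i : Fin s, Disjoint (c i.succ) (A (i : ℕ))) :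
    iSupIndep c ∧ (⨆ i, c i) = A s := by
  have hpart : ∀ k : Fin (s + 1), (⨆ j, ⨆ _ : j ≤ k, c j) = A (k : ℕ) := by
    intro k
    induction k using Fin.induction with
    | zero =>
      rw [Fin.val_zero, ← h0]
      apply le_antisymm
      · refine iSup_le fun j => iSup_le fun hj => ?_
        rw [Fin.le_zero_iff.1 hj]
      · exact le_iSup_of_le 0 (le_iSup_of_le le_rfl le_rfl)
    | succ i ih =>
      have hsplit : (⨆ j, ⨆ _ : j ≤ i.succ, c j)
          = (⨆ j, ⨆ _ : j ≤ i.castSucc, c j) ⊔ c i.succ := by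
        apply le_antisymm
        · refine iSup_le fun j => iSup_le fun hj => ?_
          rcases lt_or_eq_of_le hj with hlt | heq
          · exact le_sup_of_le_left
              (le_iSup_of_le j (le_iSup_of_le (Fin.le_castSucc_iff.2 hlt) le_rfl))
          · subst heq; exact le_sup_of_le_right le_rfl
        · refine sup_le ?_ ?_
          · refine iSup_le fun j => iSup_le fun hj => ?_
            exact le_iSup_of_le j
              (le_iSup_of_le (le_trans hj (le_of_lt Fin.castSucc_lt_succ)) le_rfl)
          · exact le_iSup_of_le i.succ (le_iSup_of_le le_rfl le_rfl)
      rw [hsplit, ih, Fin.coe_castSucc, Fin.val_succ, hstep i]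
  have hmono : ∀ j k : Fin (s + 1), j ≤ k → A (j : ℕ) ≤ A (k : ℕ) := by
    intro j k hjk
    rw [← hpart, ← hpart]
    exact iSup_le fun x => iSup_le fun hx =>
      le_iSup_of_le x (le_iSup_of_le (le_trans hx hjk) le_rfl)
  have hcA : ∀ j : Fin (s + 1), c j ≤ A (j : ℕ) := by
    intro j; rw [← hpart]; exact le_iSup_of_le j (le_iSup_of_le le_rfl le_rfl)
  constructor
  · rw [iSupIndep_def]
    intro i
    rw [Submodule.disjoint_def]
    intro x hxc hxsup
    have claim : ∀ k : Fin (s + 1), ∀ y : V, y ∈ c i →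
        y ∈ (⨆ j, ⨆ _ : j ≠ i ∧ j ≤ k, c j) → y = 0 := by
      intro k
      induction k using Fin.induction with
      | zero =>
        intro y hyc hys
        by_cases hi : i = 0
        · subst hi
          have hbot : (⨆ j, ⨆ _ : j ≠ (0 : Fin (s + 1)) ∧ j ≤ (0 : Fin (s + 1)), c j)
              = ⊥ := by
            refine le_bot_iff.1 (iSup_le fun j => iSup_le fun hj =>
              absurd (Fin.le_zero_iff.1 hj.2) hj.1)
          rw [hbot, Submodule.mem_bot] at hys
          exact hys
        · obtain ⟨u, rfl⟩ : ∃ u : Fin s, i = u.succ :=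
            ⟨i.pred hi, (Fin.succ_pred i hi).symm⟩
          have h1 : (⨆ j, ⨆ _ : j ≠ u.succ ∧ j ≤ (0 : Fin (s + 1)), c j)
              ≤ A (u : ℕ) := by
            refine iSup_le fun j => iSup_le fun hj => ?_
            rw [Fin.le_zero_iff.1 hj.2, h0]
            have := hmono 0 u.castSucc (Fin.zero_le _)
            simpa using this
          exact Submodule.disjoint_def.1 (hdisj u) y hyc (h1 hys)
      | succ t ih =>
        intro y hyc hys
        rcases lt_trichotomy i t.succ with hlt | heq | hgt
        · have hsplit : (⨆ j, ⨆ _ : j ≠ i ∧ j ≤ t.succ, c j)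
              ≤ (⨆ j, ⨆ _ : j ≠ i ∧ j ≤ t.castSucc, c j) ⊔ c t.succ := by
            refine iSup_le fun j => iSup_le fun hj => ?_
            rcases lt_or_eq_of_le hj.2 with h2 | h2
            · exact le_sup_of_le_left (le_iSup_of_le j
                (le_iSup_of_le ⟨hj.1, Fin.le_castSucc_iff.2 h2⟩ le_rfl))
            · subst h2; exact le_sup_of_le_right le_rfl
          obtain ⟨z1, hz1, z2, hz2, hzz⟩ := Submodule.mem_sup.1 (hsplit hys)
          have hz1A : z1 ∈ A (t : ℕ) := by
            have hle : (⨆ j, ⨆ _ : j ≠ i ∧ j ≤ t.castSucc, c j)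
                ≤ A ((t.castSucc : ℕ)) := by
              rw [← hpart]
              exact iSup_le fun j => iSup_le fun hj =>
                le_iSup_of_le j (le_iSup_of_le hj.2 le_rfl)
            have := hle hz1
            simpa using this
          have hyA : y ∈ A (t : ℕ) := by
            have h4 : A (i : ℕ) ≤ A (t : ℕ) := by
              have := hmono i t.castSucc (Fin.le_castSucc_iff.2 hlt)
              simpa using this
            exact h4 (hcA i hyc)
          have hz2A : z2 ∈ A (t : ℕ) := by
            have : z2 = y - z1 := by rw [← hzz]; abel
            rw [this]; exact Submodule.sub_mem _ hyA hz1A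
          have hz20 : z2 = 0 := Submodule.disjoint_def.1 (hdisj t) z2 hz2 hz2A
          have hyz1 : y = z1 := by rw [← hzz, hz20, add_zero]
          exact ih y hyc (hyz1 ▸ hz1)
        · subst heq
          have h1 : (⨆ j, ⨆ _ : j ≠ t.succ ∧ j ≤ t.succ, c j) ≤ A (t : ℕ) := by
            have hle : (⨆ j, ⨆ _ : j ≠ t.succ ∧ j ≤ t.succ, c j)
                ≤ A ((t.castSucc : ℕ)) := by
              rw [← hpart]
              refine iSup_le fun j => iSup_le fun hj => ?_
              exact le_iSup_of_le j (le_iSup_of_le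
                (Fin.le_castSucc_iff.2 (lt_of_le_of_ne hj.2 hj.1)) le_rfl)
            simpa using hle
          exact Submodule.disjoint_def.1 (hdisj t) y hyc (h1 hys)
        · have hi0 : i ≠ 0 := by
            intro h; rw [h] at hgt
            exact absurd hgt (by simp [Fin.lt_iff_val_lt_val])
          obtain ⟨u, rfl⟩ : ∃ u : Fin s, i = u.succ :=
            ⟨i.pred hi0, (Fin.succ_pred i hi0).symm⟩
          have h1 : (⨆ j, ⨆ _ : j ≠ u.succ ∧ j ≤ t.succ, c j) ≤ A (u : ℕ) := by
            refine iSup_le fun j => iSup_le fun hj => ?_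
            refine le_trans (hcA j) ?_
            have hju : j ≤ u.castSucc := Fin.le_castSucc_iff.2 (lt_of_le_of_lt hj.2 hgt)
            have := hmono j u.castSucc hju
            simpa using this
          exact Submodule.disjoint_def.1 (hdisj u) y hyc (h1 hys)
    refine claim (Fin.last s) x hxc ?_
    have hle : (⨆ j, ⨆ _ : j ≠ i, c j) ≤ (⨆ j, ⨆ _ : j ≠ i ∧ j ≤ Fin.last s, c j) :=
      iSup_le fun j => iSup_le fun hj =>
        le_iSup_of_le j (le_iSup_of_le ⟨hj, Fin.le_last j⟩ le_rfl)
    exact hle hxsup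
  · have hlast : (⨆ i, c i) = (⨆ j, ⨆ _ : j ≤ Fin.last s, c j) := by
      apply le_antisymm
      · exact iSup_le fun j => le_iSup_of_le j (le_iSup_of_le (Fin.le_last j) le_rfl)
      · exact iSup_le fun j => iSup_le fun _ => le_iSup c j
    rw [hlast, hpart (Fin.last s), Fin.val_last]

end Stmt16Aux

/-- With `L = Sg₁ + ⋯ + Sg_t` and `L_k = (g's, f₁,…,f_k)`,
`M = L ⊕ ⊕_{i=1}^s f_i · N_{L_{i−1} : f_i}` as `K`-vector spaces. -/
theorem stmt_16 (K : Type*) [Field K] (n m t s : ℕ)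
    (mo : LinearOrder (Fin n →₀ ℕ)) (hmo : IsMonomialOrderS mo)
    (g : Fin t → FreeMod K n m) (f : Fin s → FreeMod K n m)
    (M L : Submodule (MvPolynomial (Fin n) K) (FreeMod K n m))
    (Lk : ℕ → Submodule (MvPolynomial (Fin n) K) (FreeMod K n m))
    (hM : M = Submodule.span _ (Set.range g ∪ Set.range f))
    (hL : L = Submodule.span _ (Set.range g))
    (hLk : ∀ j : ℕ, Lk j = Submodule.span _
      (Set.range g ∪ f '' { i : Fin s | (i : ℕ) < j }))
    (c : Fin (s + 1) → Submodule K (FreeMod K n m))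
    (hc0 : c 0 = L.restrictScalars K)
    (hcs : ∀ i : Fin s, c i.succ = Submodule.map
      ((LinearMap.toSpanSingleton (MvPolynomial (Fin n) K) (FreeMod K n m)
          (f i)).restrictScalars K)
      (normalForms K mo (Submodule.colon (Lk i)
        (Submodule.span (MvPolynomial (Fin n) K) {f i})))) :
    iSupIndep c ∧ (⨆ i, c i) = M.restrictScalars K := by
  classical
  have hLmono : ∀ j k : ℕ, j ≤ k → Lk j ≤ Lk k := by
    intro j k hjk
    rw [hLk, hLk]
    refine Submodule.span_mono (Set.union_subset_union_right _ (Set.image_mono ?_))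
    intro i hi
    exact lt_of_lt_of_le hi hjk
  have hLk0 : Lk 0 = L := by
    rw [hLk 0, hL]
    have h1 : {i : Fin s | (i : ℕ) < 0} = ∅ := by ext i; simp
    rw [h1, Set.image_empty, Set.union_empty]
  have h0 : c 0 = Submodule.restrictScalars K (Lk 0) := by rw [hc0, hLk0]
  have hdisj : ∀ i : Fin s, Disjoint (c i.succ) (Submodule.restrictScalars K (Lk (i : ℕ))) := by
    intro i
    rw [Submodule.disjoint_def]
    intro x hx1 hx2
    rw [hcs i, Submodule.mem_map] at hx1
    obtain ⟨b, hb, rfl⟩ := hx1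
    simp only [LinearMap.coe_restrictScalars, LinearMap.toSpanSingleton_apply,
      Submodule.restrictScalars_mem] at hx2 ⊢
    have hbI : b ∈ Submodule.colon (Lk (i : ℕ))
        (Submodule.span (MvPolynomial (Fin n) K) {f i}) :=
      Submodule.mem_colon_span_singleton.2 hx2
    have hb0 : b = 0 := Stmt16Aux.eq_zero_of_mem_inf mo _ hbI hb
    rw [hb0, zero_smul]
  have hstep : ∀ i : Fin s, Submodule.restrictScalars K (Lk ((i : ℕ) + 1)) =
      Submodule.restrictScalars K (Lk (i : ℕ)) ⊔ c i.succ := by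
    intro i
    have hsplitL : Lk ((i : ℕ) + 1) = Lk (i : ℕ) ⊔
        Submodule.span (MvPolynomial (Fin n) K) {f i} := by
      rw [hLk, hLk, ← Submodule.span_union]
      congr 1
      rw [Set.union_assoc]
      congr 1
      have h1 : {j : Fin s | (j : ℕ) < (i : ℕ) + 1}
          = {j : Fin s | (j : ℕ) < (i : ℕ)} ∪ {i} := by
        ext j
        simp only [Set.mem_setOf_eq, Set.mem_union, Set.mem_singleton_iff,
          Nat.lt_succ_iff_lt_or_eq, Fin.val_inj]
      rw [h1, Set.image_union, Set.image_singleton]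
    apply le_antisymm
    · intro x hx
      rw [Submodule.restrictScalars_mem, hsplitL] at hx
      obtain ⟨y, hy, z, hz, rfl⟩ := Submodule.mem_sup.1 hx
      obtain ⟨p, rfl⟩ := Submodule.mem_span_singleton.1 hz
      obtain ⟨a, ha, b, hb, hab⟩ := Submodule.mem_sup.1
        (Stmt16Aux.mem_ideal_sup_normalForms mo hmo
          (Submodule.colon (Lk (i : ℕ))
            (Submodule.span (MvPolynomial (Fin n) K) {f i})) p)
      have hsplitx : y + p • f i = (y + a • f i) + b • f i := by
        rw [← hab, add_smul]; abel
      rw [hsplitx]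
      refine Submodule.add_mem _ ?_ ?_
      · apply Submodule.mem_sup_left
        rw [Submodule.restrictScalars_mem]
        refine Submodule.add_mem _ hy ?_
        have ha' : a ∈ Submodule.colon (Lk (i : ℕ))
            (Submodule.span (MvPolynomial (Fin n) K) {f i}) := ha
        exact Submodule.mem_colon_span_singleton.1 ha'
      · apply Submodule.mem_sup_right
        rw [hcs i, Submodule.mem_map]
        exact ⟨b, hb, by
          simp only [LinearMap.coe_restrictScalars, LinearMap.toSpanSingleton_apply]⟩
    · refine sup_le ?_ ?_
      · intro x hx
        rw [Submodule.restrictScalars_mem] at hx ⊢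
        exact hLmono (i : ℕ) ((i : ℕ) + 1) (Nat.le_succ _) hx
      · intro x hx
        rw [hcs i, Submodule.mem_map] at hx
        obtain ⟨b, hb, rfl⟩ := hx
        simp only [LinearMap.coe_restrictScalars, LinearMap.toSpanSingleton_apply,
          Submodule.restrictScalars_mem]
        refine Submodule.smul_mem _ b ?_
        rw [hLk]
        refine Submodule.subset_span (Set.mem_union_right _ ?_)
        exact ⟨i, by simp, rfl⟩
  obtain ⟨hind, hsup⟩ := Stmt16Aux.chain_decomp c
    (fun k => Submodule.restrictScalars K (Lk k)) h0 hstep hdisj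
  refine ⟨hind, ?_⟩
  rw [hsup]
  have hLks : Lk s = M := by
    rw [hLk s, hM]
    have h1 : {i : Fin s | (i : ℕ) < s} = Set.univ := by
      ext i; simp [i.isLt]
    rw [h1, Set.image_univ]
  rw [hLks]
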